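/- Let α_2, ε, q_1, q_2, q_3 be positive real numbers such that the denominators below are nonzero, and define β* = (α_2 q_1 + ε(q_1 q_3 − q_1 − q_3) + α_2 ε q_3)/(α_2 q_2 + ε q_3 + α_2 ε(q_2 q_3 − q_2 − q_3)), γ* = (α_2(q_1 q_2 − q_1 − q_2) + ε q_1 + α_2 ε q_2)/(α_2 q_2 + ε q_3 + α_2 ε(q_2 q_3 − q_2 − q_3)), x_1* = q_1/(1 + β* + γ*), x_2* = q_2 β*/(1 + β* + γ*), x_3* = q_3 γ*/(1 + β* + γ*), and λ = α_2 ε(q_1 q_2 + q_2 q_3 + q_3 q_1 − q_1 q_2 q_3)/(α_2 q_1 q_2 + ε q_3 q_1 + α_2 ε q_2 q_3). Then 1 − x_1* = λ, α_2(1 − x_2*) = λ, and ε(1 − x_3*) = λ; that is, all three viral mutants grow exponentially with the same effective rate λ at this state. -/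

import Mathlib

/-- In the three-mutant system, at the state `(β*, γ*, x₁*, x₂*, x₃*)` all three
mutants grow with the same effective rate `λ`:
`1 - x₁* = λ`, `α₂(1 - x₂*) = λ`, and `ε(1 - x₃*) = λ`. -/
theorem stmt_17 (α₂ ε q₁ q₂ q₃ : ℝ)
    (hα₂ : 0 < α₂) (hε : 0 < ε) (hq₁ : 0 < q₁) (hq₂ : 0 < q₂) (hq₃ : 0 < q₃)
    (βs γs x₁s x₂s x₃s lam : ℝ)
    (hden₁ : α₂ * q₂ + ε * q₃ + α₂ * ε * (q₂ * q₃ - q₂ - q₃) ≠ 0)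
    (hden₂ : α₂ * q₁ * q₂ + ε * q₃ * q₁ + α₂ * ε * q₂ * q₃ ≠ 0)
    (hden₃ : 1 + βs + γs ≠ 0)
    (hβ : βs = (α₂ * q₁ + ε * (q₁ * q₃ - q₁ - q₃) + α₂ * ε * q₃) /
      (α₂ * q₂ + ε * q₃ + α₂ * ε * (q₂ * q₃ - q₂ - q₃)))
    (hγ : γs = (α₂ * (q₁ * q₂ - q₁ - q₂) + ε * q₁ + α₂ * ε * q₂) /
      (α₂ * q₂ + ε * q₃ + α₂ * ε * (q₂ * q₃ - q₂ - q₃)))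
    (hx₁ : x₁s = q₁ / (1 + βs + γs))
    (hx₂ : x₂s = q₂ * βs / (1 + βs + γs))
    (hx₃ : x₃s = q₃ * γs / (1 + βs + γs))
    (hlam : lam = α₂ * ε * (q₁ * q₂ + q₂ * q₃ + q₃ * q₁ - q₁ * q₂ * q₃) /
      (α₂ * q₁ * q₂ + ε * q₃ * q₁ + α₂ * ε * q₂ * q₃)) :
    1 - x₁s = lam ∧ α₂ * (1 - x₂s) = lam ∧ ε * (1 - x₃s) = lam := by
  subst hx₁ hx₂ hx₃ hlam
  have h3 := hden₃
  rw [hβ, hγ] at h3 ⊢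
  generalize hD : (α₂ * q₂ + ε * q₃ + α₂ * ε * (q₂ * q₃ - q₂ - q₃)) = D at hden₁ h3 ⊢
  rw [one_add_div hden₁, ← add_div] at h3 ⊢
  have hN := (div_ne_zero_iff.mp h3).1
  generalize hS : D + (α₂ * q₁ + ε * (q₁ * q₃ - q₁ - q₃) + α₂ * ε * q₃) +
    (α₂ * (q₁ * q₂ - q₁ - q₂) + ε * q₁ + α₂ * ε * q₂) = S at hN ⊢
  refine ⟨?_, ?_, ?_⟩ <;> field_simp <;> subst hS <;> subst hD <;> ring
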